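/- Let H₁, H₂ be positive definite 2n×2n complex matrices and g an invertible 2n×2n complex matrix such that H₁ = g·H₂·g*, and suppose in addition that H₁, H₂ and g all lie in Sp(2n,ℂ) (i.e. Mᵀ𝒥_nM = 𝒥_n for M = H₁, H₂, g). Let S₁, S₂ be the unique positive semidefinite square roots of H₁, H₂. Then S₁⁻¹·g·S₂ lies in Sp(2n,ℂ) ∩ U(2n), i.e. it satisfies both (S₁⁻¹gS₂)ᵀ𝒥_n(S₁⁻¹gS₂) = 𝒥_n and (S₁⁻¹gS₂)*(S₁⁻¹gS₂) = I. -/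

import Mathlib

open Matrix
open scoped ComplexOrder

/-- The matrix `𝒥_n = [[0, I_n], [-I_n, 0]]` of the paper. -/
def Jmat (n : ℕ) : Matrix (Fin n ⊕ Fin n) (Fin n ⊕ Fin n) ℂ :=
  Matrix.fromBlocks 0 1 (-1) 0

lemma Jmat_mul_self (n : ℕ) : Jmat n * Jmat n = -1 := by
  simp [Jmat, Matrix.fromBlocks_multiply, Matrix.fromBlocks_neg,
    ← Matrix.fromBlocks_one]

lemma Jmat_conjTranspose (n : ℕ) : (Jmat n)ᴴ = -(Jmat n) := by
  simp [Jmat, Matrix.fromBlocks_conjTranspose, Matrix.fromBlocks_neg]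

lemma isUnit_of_sq {n : ℕ} {S H : Matrix (Fin n ⊕ Fin n) (Fin n ⊕ Fin n) ℂ}
    (hH : H.PosDef) (hsq : S * S = H) : IsUnit S := by
  rw [Matrix.isUnit_iff_isUnit_det]
  have hdet : S.det * S.det = H.det := by rw [← Matrix.det_mul, hsq]
  have : IsUnit (S.det * S.det) := hdet ▸ (Matrix.isUnit_iff_isUnit_det H).mp hH.isUnit
  exact isUnit_of_mul_isUnit_left this

/-- the positive semidefinite square root of a symplectic positive definite
matrix is symplectic -/
lemma sqrt_symplectic {n : ℕ} {H S : Matrix (Fin n ⊕ Fin n) (Fin n ⊕ Fin n) ℂ}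
    (hH : H.PosDef) (hS : S.PosSemidef) (hsq : S * S = H)
    (hsp : Hᵀ * Jmat n * H = Jmat n) : Sᵀ * Jmat n * S = Jmat n := by
  have hSu : IsUnit S := isUnit_of_sq hH hsq
  have hSd : IsUnit S.det := (Matrix.isUnit_iff_isUnit_det S).mp hSu
  have hHd : IsUnit H.det := (Matrix.isUnit_iff_isUnit_det H).mp hH.isUnit
  have hTd : IsUnit Hᵀ.det := by rwa [Matrix.det_transpose]
  set J := Jmat n with hJ
  have hJJ : J * J = -1 := Jmat_mul_self n
  have hJJ' : J * Jᴴ = 1 := by rw [Jmat_conjTranspose, Matrix.mul_neg, hJJ]; simp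
  have hJJ'' : Jᴴ * J = 1 := by rw [Jmat_conjTranspose, Matrix.neg_mul, hJJ]; simp
  have h3 : J * H = Hᵀ⁻¹ * J := by
    calc J * H = Hᵀ⁻¹ * Hᵀ * (J * H) := by
          rw [Matrix.nonsing_inv_mul _ hTd, Matrix.one_mul]
    _ = Hᵀ⁻¹ * (Hᵀ * J * H) := by noncomm_ring
    _ = Hᵀ⁻¹ * J := by rw [hsp]
  have h2 : H * Jᴴ = Jᴴ * Hᵀ⁻¹ := by
    calc H * Jᴴ = Jᴴ * (J * H) * Jᴴ := by
          rw [← Matrix.mul_assoc, hJJ'', Matrix.one_mul]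
    _ = Jᴴ * (Hᵀ⁻¹ * J) * Jᴴ := by rw [h3]
    _ = Jᴴ * Hᵀ⁻¹ * (J * Jᴴ) := by noncomm_ring
    _ = Jᴴ * Hᵀ⁻¹ := by rw [hJJ', Matrix.mul_one]
  have hHinv : H⁻¹ = Jᴴ * Hᵀ * J := by
    apply Matrix.inv_eq_right_inv
    calc H * (Jᴴ * Hᵀ * J) = (H * Jᴴ) * Hᵀ * J := by noncomm_ring
    _ = Jᴴ * (Hᵀ⁻¹ * Hᵀ) * J := by rw [h2]; noncomm_ring
    _ = 1 := by rw [Matrix.nonsing_inv_mul _ hTd, Matrix.mul_one, hJJ'']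
  have hK : (Jᴴ * Sᵀ * J).PosSemidef := hS.transpose.conjTranspose_mul_mul_same J
  have hSinv : (S⁻¹).PosSemidef := hS.inv
  have hKsq : (Jᴴ * Sᵀ * J) ^ 2 = (S⁻¹) ^ 2 := by
    have h5 : (Jᴴ * Sᵀ * J) * (Jᴴ * Sᵀ * J) = Jᴴ * (Sᵀ * Sᵀ) * J := by
      calc (Jᴴ * Sᵀ * J) * (Jᴴ * Sᵀ * J) = Jᴴ * Sᵀ * (J * Jᴴ) * Sᵀ * J := by noncomm_ring
      _ = Jᴴ * (Sᵀ * Sᵀ) * J := by rw [hJJ']; noncomm_ring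
    rw [pow_two, pow_two, h5, ← Matrix.transpose_mul, hsq,
      ← Matrix.mul_inv_rev, hsq, hHinv]
  have hKeq : Jᴴ * Sᵀ * J = S⁻¹ := by
    open scoped MatrixOrder in
    rw [← CFC.sqrt_unique (pow_two (Jᴴ * Sᵀ * J)).symm hK.nonneg,
      ← CFC.sqrt_unique (pow_two S⁻¹).symm hSinv.nonneg, hKsq]
  calc Sᵀ * J * S = (J * Jᴴ) * Sᵀ * J * S := by rw [hJJ', Matrix.one_mul]
  _ = J * (Jᴴ * Sᵀ * J) * S := by noncomm_ring
  _ = J * S⁻¹ * S := by rw [hKeq]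
  _ = J := by rw [Matrix.mul_assoc, Matrix.nonsing_inv_mul _ hSd, Matrix.mul_one]

lemma symplectic_inv {n : ℕ} {A : Matrix (Fin n ⊕ Fin n) (Fin n ⊕ Fin n) ℂ}
    (hA : IsUnit A) (h : Aᵀ * Jmat n * A = Jmat n) :
    (A⁻¹)ᵀ * Jmat n * A⁻¹ = Jmat n := by
  have hd : IsUnit A.det := (Matrix.isUnit_iff_isUnit_det A).mp hA
  have hTd : IsUnit Aᵀ.det := by rwa [Matrix.det_transpose]
  rw [Matrix.transpose_nonsing_inv]
  calc Aᵀ⁻¹ * Jmat n * A⁻¹ = Aᵀ⁻¹ * (Aᵀ * Jmat n * A) * A⁻¹ := by rw [h]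
  _ = (Aᵀ⁻¹ * Aᵀ) * Jmat n * (A * A⁻¹) := by noncomm_ring
  _ = Jmat n := by
    rw [Matrix.nonsing_inv_mul _ hTd, Matrix.mul_nonsing_inv _ hd,
      Matrix.one_mul, Matrix.mul_one]

/-- under the cocycle relation `H₁ = g H₂ g*` with `H₁, H₂, g` in
`Sp(2n,ℂ)` and `H₁, H₂` positive definite, the matrix `S₁⁻¹ g S₂` built from the
positive semidefinite square roots `S₁, S₂` lies in `Sp(2n) = Sp(2n,ℂ) ∩ U(2n)`. -/
theorem transition_mem_compact_symplectic
    (n : ℕ) (H₁ H₂ g S₁ S₂ : Matrix (Fin n ⊕ Fin n) (Fin n ⊕ Fin n) ℂ)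
    (hH₁ : H₁.PosDef) (hH₂ : H₂.PosDef)
    (hg : IsUnit g)
    (hrel : H₁ = g * H₂ * gᴴ)
    (hH₁sp : H₁ᵀ * Jmat n * H₁ = Jmat n)
    (hH₂sp : H₂ᵀ * Jmat n * H₂ = Jmat n)
    (hgsp : gᵀ * Jmat n * g = Jmat n)
    (hS₁ : S₁.PosSemidef) (hS₁sq : S₁ * S₁ = H₁)
    (hS₂ : S₂.PosSemidef) (hS₂sq : S₂ * S₂ = H₂) :
    (S₁⁻¹ * g * S₂)ᵀ * Jmat n * (S₁⁻¹ * g * S₂) = Jmat n ∧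
      (S₁⁻¹ * g * S₂)ᴴ * (S₁⁻¹ * g * S₂) = 1 := by
  have hS₁u : IsUnit S₁ := isUnit_of_sq hH₁ hS₁sq
  have hS₂u : IsUnit S₂ := isUnit_of_sq hH₂ hS₂sq
  have hS₂d : IsUnit S₂.det := (Matrix.isUnit_iff_isUnit_det S₂).mp hS₂u
  have hgd : IsUnit g.det := (Matrix.isUnit_iff_isUnit_det g).mp hg
  have hgHd : IsUnit gᴴ.det := by
    rw [Matrix.det_conjTranspose]; exact hgd.star
  constructor
  · -- symplectic part
    have s1 : S₁ᵀ * Jmat n * S₁ = Jmat n := sqrt_symplectic hH₁ hS₁ hS₁sq hH₁sp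
    have s2 : S₂ᵀ * Jmat n * S₂ = Jmat n := sqrt_symplectic hH₂ hS₂ hS₂sq hH₂sp
    have s1inv : (S₁⁻¹)ᵀ * Jmat n * S₁⁻¹ = Jmat n := symplectic_inv hS₁u s1
    calc (S₁⁻¹ * g * S₂)ᵀ * Jmat n * (S₁⁻¹ * g * S₂)
        = S₂ᵀ * (gᵀ * ((S₁⁻¹)ᵀ * Jmat n * S₁⁻¹) * g) * S₂ := by
          simp only [Matrix.transpose_mul]; noncomm_ring
      _ = Jmat n := by rw [s1inv, hgsp, s2]
  · -- unitary part
    have key : S₁⁻¹ * S₁⁻¹ = gᴴ⁻¹ * (H₂⁻¹ * g⁻¹) := by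
      rw [← Matrix.mul_inv_rev, hS₁sq, hrel, Matrix.mul_inv_rev, Matrix.mul_inv_rev]
    calc (S₁⁻¹ * g * S₂)ᴴ * (S₁⁻¹ * g * S₂)
        = S₂ * (gᴴ * (S₁⁻¹ * S₁⁻¹) * g) * S₂ := by
          simp only [Matrix.conjTranspose_mul, Matrix.conjTranspose_nonsing_inv,
            hS₁.1.eq, hS₂.1.eq]
          noncomm_ring
      _ = S₂ * ((gᴴ * gᴴ⁻¹) * H₂⁻¹ * (g⁻¹ * g)) * S₂ := by rw [key]; noncomm_ring
      _ = S₂ * H₂⁻¹ * S₂ := by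
          rw [Matrix.mul_nonsing_inv _ hgHd, Matrix.nonsing_inv_mul _ hgd,
            Matrix.one_mul, Matrix.mul_one]
      _ = (S₂ * S₂⁻¹) * (S₂⁻¹ * S₂) := by
          rw [← hS₂sq, Matrix.mul_inv_rev]; noncomm_ring
      _ = 1 := by
          rw [Matrix.mul_nonsing_inv _ hS₂d, Matrix.nonsing_inv_mul _ hS₂d,
            Matrix.one_mul]
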